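/- Let λ* = (λ₁*,…,λ₆*) ∈ ℝ⁶ satisfy λ₁* = λ₂* = λ₅* = 0, λ₃* = λ₆*, and λ₄* ≠ 0 (i.e. λ* is a smooth point of the intersection I₁ ∩ I₂, not on I₃). Then the ideal of ℝ[λ₁,…,λ₆] generated by the Kapteyn–Bautin polynomials v₁, v₂, v₃, v₄ and the ideal generated by λ₁, λ₅(λ₃−λ₆), λ₂(λ₃−λ₆) coincide locally at λ*. -/

import Mathlib

open MvPolynomial

/-- The multiplicative set of polynomials not vanishing at `p`, i.e. the complement of
the maximal ideal of polynomials vanishing at `p`. -/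
def nonVanishing (K : Type*) [Field K] (p : Fin 6 → K) :
    Submonoid (MvPolynomial (Fin 6) K) where
  carrier := {f | eval p f ≠ 0}
  mul_mem' := by
    intro a b ha hb
    simp only [Set.mem_setOf_eq, map_mul] at ha hb ⊢
    exact mul_ne_zero ha hb
  one_mem' := by simp

/-- Two ideals of `K[λ₁,…,λ₆]` coincide locally at `p` if their extensions to the
localization of the polynomial ring at the maximal ideal of polynomials vanishing at `p`
(equivalently, the localization inverting all polynomials not vanishing at `p`) are equal. -/
def coincideLocally (K : Type*) [Field K] (p : Fin 6 → K)
    (I J : Ideal (MvPolynomial (Fin 6) K)) : Prop :=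
  Ideal.map (algebraMap (MvPolynomial (Fin 6) K) (Localization (nonVanishing K p))) I =
  Ideal.map (algebraMap (MvPolynomial (Fin 6) K) (Localization (nonVanishing K p))) J

/-- The Bautin ideal of the Kapteyn normal form, generated by the Kapteyn–Bautin
polynomials `v₁ = λ₁`, `v₂ = λ₅(λ₃−λ₆)`, `v₃ = λ₂λ₄(λ₃−λ₆)(λ₄+5λ₃−5λ₆)`,
`v₄ = λ₂λ₄(λ₃−λ₆)²(λ₃λ₆−2λ₆²−λ₂²)`, where `X 0 = λ₁, …, X 5 = λ₆`. -/
noncomputable def bautinIdeal (K : Type*) [Field K] : Ideal (MvPolynomial (Fin 6) K) :=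
  Ideal.span {X 0, X 4 * (X 2 - X 5),
    X 1 * X 3 * (X 2 - X 5) * (X 3 + 5 * X 2 - 5 * X 5),
    X 1 * X 3 * (X 2 - X 5) ^ 2 * (X 2 * X 5 - 2 * X 5 ^ 2 - X 1 ^ 2)}

/-- at a smooth point `λ*` of `I₁ ∩ I₂` not on `I₃`
(`λ₁* = λ₂* = λ₅* = 0`, `λ₃* = λ₆*`, `λ₄* ≠ 0`, base field `ℝ`), the Bautin ideal
coincides locally at `λ*` with the ideal `(λ₁, λ₅(λ₃−λ₆), λ₂(λ₃−λ₆))`. -/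
theorem stmt_9 (l1 l2 l3 l4 l5 l6 : ℝ)
    (h1 : l1 = 0) (h2 : l2 = 0) (h5 : l5 = 0)
    (h36 : l3 = l6) (h4 : l4 ≠ 0) :
    coincideLocally ℝ ![l1, l2, l3, l4, l5, l6]
      (bautinIdeal ℝ)
      (Ideal.span {X 0, X 4 * (X 2 - X 5), X 1 * (X 2 - X 5)}) := by

  classical
  unfold coincideLocally
  set p : Fin 6 → ℝ := ![l1, l2, l3, l4, l5, l6] with hp
  set S := nonVanishing ℝ p with hS
  set L := Localization S with hL
  set φ := algebraMap (MvPolynomial (Fin 6) ℝ) L with hφ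
  -- the key denominator
  set d : MvPolynomial (Fin 6) ℝ := X 3 * (X 3 + 5 * X 2 - 5 * X 5) with hd_def
  have hp2 : p 2 = l3 := rfl
  have hp3 : p 3 = l4 := rfl
  have hp5 : p 5 = l6 := rfl
  have hdS : d ∈ S := by
    show eval p d ≠ 0
    have : eval p d = l4 * (l4 + 5 * l3 - 5 * l6) := by
      simp [hd_def, hp2, hp3, hp5]
    rw [this, h36]
    simpa using mul_ne_zero h4 h4
  -- v₃ generator membership in bautinIdeal
  have hv3 : X 1 * X 3 * (X 2 - X 5) * (X 3 + 5 * X 2 - 5 * X 5) ∈ bautinIdeal ℝ :=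
    Ideal.subset_span (by simp)
  apply le_antisymm
  · apply Ideal.map_mono
    rw [bautinIdeal, Ideal.span_le]
    intro f hf
    simp only [Set.mem_insert_iff, Set.mem_singleton_iff] at hf
    rcases hf with h | h | h | h <;> subst h
    · exact Ideal.subset_span (by simp)
    · exact Ideal.subset_span (by simp)
    · have he : (X 1 * X 3 * (X 2 - X 5) * (X 3 + 5 * X 2 - 5 * X 5) : MvPolynomial (Fin 6) ℝ)
          = (X 1 * (X 2 - X 5)) * (X 3 * (X 3 + 5 * X 2 - 5 * X 5)) := by ring
      rw [he]
      exact Ideal.mul_mem_right _ _ (Ideal.subset_span (by simp))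
    · have he : (X 1 * X 3 * (X 2 - X 5) ^ 2 * (X 2 * X 5 - 2 * X 5 ^ 2 - X 1 ^ 2) : MvPolynomial (Fin 6) ℝ)
          = (X 1 * (X 2 - X 5)) *
            (X 3 * (X 2 - X 5) * (X 2 * X 5 - 2 * X 5 ^ 2 - X 1 ^ 2)) := by ring
      rw [he]
      exact Ideal.mul_mem_right _ _ (Ideal.subset_span (by simp))
  · rw [Ideal.map_span, Ideal.span_le]
    rintro f ⟨g, hg, rfl⟩
    simp only [Set.mem_insert_iff, Set.mem_singleton_iff] at hg
    rcases hg with h | h | h <;> subst h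
    · exact Ideal.mem_map_of_mem φ (Ideal.subset_span (by simp))
    · exact Ideal.mem_map_of_mem φ (Ideal.subset_span (by simp))
    · -- X 1 * (X 2 - X 5) = v₃ / d in the localization
      obtain ⟨u, hu⟩ := IsLocalization.map_units (M := S) L ⟨d, hdS⟩
      have key : φ (X 1 * (X 2 - X 5)) * φ d ∈
          Ideal.map φ (bautinIdeal ℝ) := by
        rw [← map_mul]
        have he : (X 1 * (X 2 - X 5)) * d
            = X 1 * X 3 * (X 2 - X 5) * (X 3 + 5 * X 2 - 5 * X 5) := by
          rw [hd_def]; ring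
        rw [he]
        exact Ideal.mem_map_of_mem φ hv3
      have hrw : φ (X 1 * (X 2 - X 5))
          = φ (X 1 * (X 2 - X 5)) * φ d * ↑u⁻¹ := by
        rw [← hu, mul_assoc, Units.mul_inv, mul_one]
      rw [hrw]
      exact Ideal.mul_mem_right _ _ key
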